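/- For every fixed positive integer k, there exists N such that for all n ≥ N (with n − k ≥ 1), α_n^{n−k} = φ(n) · C(n−1, k−1), where C(n−1, k−1) denotes the binomial coefficient. -/

import Mathlib

/-- A tuple `v : Fin d → ZMod n` is zero-sum-free if no non-empty subset of its
components sums to zero in `ZMod n`. -/
def ZeroSumFree {n d : ℕ} (v : Fin d → ZMod n) : Prop :=
  ∀ S : Finset (Fin d), S.Nonempty → ∑ i ∈ S, v i ≠ 0

/-- `alphaZSF n d` is the number of zero-sum-free `d`-tuples in `(ZMod n)^d`. -/
noncomputable def alphaZSF (n d : ℕ) : ℕ :=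
  Nat.card {v : Fin d → ZMod n // ZeroSumFree v}

/-- A tuple is irreducible if `gcd(v₁, ..., v_d, n) = 1`, where components are
identified with their representatives in `{0, 1, ..., n-1}`. -/
def IrreducibleTuple {n d : ℕ} (v : Fin d → ZMod n) : Prop :=
  Nat.gcd (Finset.univ.gcd fun i => (v i).val) n = 1

/-- `betaZSF n d` is the number of irreducible zero-sum-free `d`-tuples in `(ZMod n)^d`. -/
noncomputable def betaZSF (n d : ℕ) : ℕ :=
  Nat.card {v : Fin d → ZMod n // ZeroSumFree v ∧ IrreducibleTuple v}

namespace ZSF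

variable {n d : ℕ} {v : Fin d → ZMod n}

lemma sum_ne_zero_of_nodup (hv : ZeroSumFree v) {l : List (Fin d)} (hl : l.Nodup)
    (hne : l ≠ []) : (l.map v).sum ≠ 0 := by
  rw [← List.sum_toFinset _ hl]
  exact hv l.toFinset (by simpa [List.toFinset_eq_empty_iff] using hne)

lemma prefix_ne (hv : ZeroSumFree v) {l : List (Fin d)} (hl : l.Nodup)
    {i j : ℕ} (hij : i < j) (hj : j ≤ l.length) :
    ((l.take i).map v).sum ≠ ((l.take j).map v).sum := by
  have hdecomp : l.take j = l.take i ++ (l.drop i).take (j - i) := by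
    have h' := List.take_add (l := l) (i := i) (j := j - i)
    have : i + (j - i) = j := by omega
    rwa [this] at h'
  have hseg : ((l.drop i).take (j - i)).Nodup :=
    ((List.take_sublist _ _).trans (List.drop_sublist _ _)).nodup hl
  have hsegne : (l.drop i).take (j - i) ≠ [] := by
    have : ((l.drop i).take (j - i)).length = min (j - i) (l.length - i) := by
      simp [List.length_take, List.length_drop]
    intro h
    rw [h] at this
    simp at this
    omega
  have hz := sum_ne_zero_of_nodup hv hseg hsegne
  intro h
  rw [hdecomp, List.map_append, List.sum_append] at h
  exact hz (by linear_combination -h)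

lemma prefix_nonzero (hv : ZeroSumFree v) {l : List (Fin d)} (hl : l.Nodup)
    {j : ℕ} (hj1 : 1 ≤ j) (hj : j ≤ l.length) :
    ((l.take j).map v).sum ≠ 0 := by
  have := prefix_ne hv hl (show 0 < j by omega) hj
  simpa using this.symm

lemma swap_avoid (hv : ZeroSumFree v) {A B : List (Fin d)} {x y : Fin d}
    (hl : (A ++ x :: y :: B).Nodup) (hxy : v x ≠ v y) :
    ((A.map v).sum + v y ≠ 0) ∧
    ∀ j : ℕ, j ≤ (A ++ x :: y :: B).length → (A.map v).sum + v y ≠ (((A ++ x :: y :: B).take j).map v).sum := by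
  set l := A ++ x :: y :: B with hldef
  set l' := A ++ y :: x :: B with hl'def
  have hperm : List.Perm l l' := List.Perm.append_left A (List.Perm.swap y x B)
  have hl' : l'.Nodup := hperm.nodup_iff.mp hl
  have hlen : l'.length = l.length := hperm.symm.length_eq
  have hA1 : A.length + 1 ≤ l'.length := by
    simp [hl'def, List.length_append]
  -- μ as prefix sum of l' at position A.length + 1
  have hmu : ((l'.take (A.length + 1)).map v).sum = (A.map v).sum + v y := by
    have : l'.take (A.length + 1) = A ++ [y] := by
      rw [hl'def]
      rw [List.take_append]
      simp
    rw [this]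
    simp
  constructor
  · have h0 := prefix_ne hv hl' (show 0 < A.length + 1 by omega) hA1
    rw [hmu] at h0
    simpa using h0.symm
  · intro j hj h
    rcases lt_trichotomy j (A.length + 1) with hlt | heq | hgt
    · -- j ≤ A.length: prefix of l and l' agree
      have hje : l.take j = l'.take j := by
        rw [hldef, hl'def, List.take_append, List.take_append]
        have : j - A.length = 0 := by omega
        simp [this]
      rw [hje] at h
      exact prefix_ne hv hl' (show j < A.length + 1 by omega) hA1 (h.symm.trans hmu.symm)
    · -- j = A.length + 1 : prefix sum of l is sum A + v x
      subst heq
      have : (l.take (A.length + 1)).map v = (A ++ [x]).map v := by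
        rw [hldef, List.take_append]
        simp
      rw [this] at h
      simp at h
      exact hxy (by linear_combination h.symm)
    · -- j ≥ A.length + 2 : prefix sums of l and l' agree
      have hje : ((l.take j).map v).sum = ((l'.take j).map v).sum := by
        rw [hldef, hl'def, List.take_append, List.take_append]
        have h2 : j - A.length = (j - A.length - 2) + 2 := by omega
        rw [h2]
        simp only [List.take_succ_cons, List.map_append, List.sum_append, List.map_cons, List.sum_cons]
        ring
      rw [hje] at h
      rw [← hmu] at h
      exact prefix_ne hv hl' (show A.length + 1 < j by omega) (by omega) h

lemma kcl [NeZero n] (hv : ZeroSumFree v) (hd : 0 < d) {F : List (Fin d)} (hF : F.Nodup)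
    {K : Finset ℕ} (hK1 : ∀ j ∈ K, j + 1 < F.length)
    (hval : ∀ j ∈ K, v (F.getD j ⟨0, hd⟩) ≠ v (F.getD (j+1) ⟨0, hd⟩))
    (hinj : Set.InjOn (fun j => ((F.take j).map v).sum + v (F.getD (j+1) ⟨0, hd⟩)) K) :
    d + K.card ≤ n - 1 := by
  classical
  set μ : ℕ → ZMod n := fun j => ((F.take j).map v).sum + v (F.getD (j+1) ⟨0, hd⟩) with hμdef
  set T : List (Fin d) := (Finset.univ \ F.toFinset).toList with hTdef
  set l : List (Fin d) := F ++ T with hldef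
  have hTnd : T.Nodup := Finset.nodup_toList _
  have hlnd : l.Nodup := by
    rw [hldef, List.nodup_append]
    refine ⟨hF, hTnd, ?_⟩
    intro a ha b hb hab; subst hab
    have : a ∈ Finset.univ \ F.toFinset := by
      rwa [← Finset.mem_toList]
    simp [List.mem_toFinset.mpr ha] at this
  have hFcard : F.toFinset.card = F.length := List.toFinset_card_of_nodup hF
  have hlen : l.length = d := by
    rw [hldef, List.length_append]
    have : T.length = (Finset.univ \ F.toFinset).card := Finset.length_toList _
    rw [this, Finset.card_sdiff_of_subset (Finset.subset_univ _), hFcard]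
    have : F.length ≤ d := by
      simpa using hF.length_le_card
    simp
    omega
  -- the decomposition of l at a position j ∈ K
  have hdecomp : ∀ j ∈ K, l = (F.take j) ++ (F.getD j ⟨0, hd⟩) :: (F.getD (j+1) ⟨0, hd⟩) :: (F.drop (j+2) ++ T) := by
    intro j hj
    have h1 : j + 1 < F.length := hK1 j hj
    have h0 : j < F.length := by omega
    have e0 : F.getD j ⟨0, hd⟩ = F[j] := List.getD_eq_getElem F _ h0
    have e1 : F.getD (j+1) ⟨0, hd⟩ = F[j+1] := List.getD_eq_getElem F _ h1
    have hdrop : F.drop j = F[j] :: F[j+1] :: F.drop (j+2) := by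
      rw [List.drop_eq_getElem_cons h0]
      congr 1
      rw [List.drop_eq_getElem_cons (by omega : j + 1 < F.length)]
    rw [e0, e1, hldef]
    conv_lhs => rw [← List.take_append_drop j F, hdrop]
    simp only [List.append_assoc, List.cons_append]
  -- P : prefix sums
  set P : Finset (ZMod n) := (Finset.range d).image (fun j => ((l.take (j+1)).map v).sum) with hPdef
  have hPcard : P.card = d := by
    rw [hPdef, Finset.card_image_of_injOn, Finset.card_range]
    intro a ha b hb hab
    simp only [Finset.coe_range, Set.mem_Iio] at ha hb
    by_contra hne
    rcases lt_or_gt_of_ne hne with h | h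
    · exact prefix_ne hv hlnd (by omega : a + 1 < b + 1) (by omega) hab
    · exact prefix_ne hv hlnd (by omega : b + 1 < a + 1) (by omega) hab.symm
  set M : Finset (ZMod n) := K.image μ with hMdef
  have hMcard : M.card = K.card := Finset.card_image_of_injOn hinj
  have hdisj : Disjoint P M := by
    rw [Finset.disjoint_left]
    intro z hzP hzM
    simp only [hPdef, Finset.mem_image, Finset.mem_range] at hzP
    simp only [hMdef, Finset.mem_image] at hzM
    obtain ⟨i, hi, hiz⟩ := hzP
    obtain ⟨j, hj, hjz⟩ := hzM
    have hdec := hdecomp j hj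
    have hsw := swap_avoid hv (hdec ▸ hlnd) (hval j hj)
    have := hsw.2 (i+1) (by rw [← hdec, hlen]; omega)
    rw [← hdec] at this
    have hAsum : ((F.take j).map v).sum = (((F.take j) : List (Fin d)).map v).sum := rfl
    apply this
    show μ j = _
    rw [hjz]
    exact hiz.symm
  have hsub : P ∪ M ⊆ Finset.univ.erase 0 := by
    intro z hz
    rcases Finset.mem_union.mp hz with hz | hz
    · simp only [hPdef, Finset.mem_image, Finset.mem_range] at hz
      obtain ⟨i, hi, hiz⟩ := hz
      refine Finset.mem_erase.mpr ⟨?_, Finset.mem_univ _⟩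
      rw [← hiz]
      exact ZSF.prefix_nonzero hv hlnd (by omega) (by omega)
    · simp only [hMdef, Finset.mem_image] at hz
      obtain ⟨j, hj, hjz⟩ := hz
      refine Finset.mem_erase.mpr ⟨?_, Finset.mem_univ _⟩
      rw [← hjz]
      have hdec := hdecomp j hj
      have hsw := swap_avoid hv (hdec ▸ hlnd) (hval j hj)
      exact hsw.1
  have hcard := Finset.card_le_card hsub
  rw [Finset.card_union_of_disjoint hdisj, hPcard, hMcard] at hcard
  have : (Finset.univ.erase (0 : ZMod n)).card = n - 1 := by
    rw [Finset.card_erase_of_mem (Finset.mem_univ _)]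
    simp [ZMod.card]
  omega

lemma mult_dichotomy [NeZero n] (hv : ZeroSumFree v) {k : ℕ} (hk : 1 ≤ k) (hn : d + k = n)
    (hd : 0 < d) (g : ZMod n)
    (hO : k ≤ (Finset.univ.filter (fun i => v i = g)).card)
    (hR : k ≤ (Finset.univ.filter (fun i => v i ≠ g)).card) : False := by
  classical
  obtain ⟨G, hGsub, hGcard⟩ := Finset.exists_subset_card_eq hO
  obtain ⟨X, hXsub, hXcard⟩ := Finset.exists_subset_card_eq hR
  have hhalf : ∀ t : Fin (2*k), t.val / 2 < k := fun t => by
    have := t.isLt; omega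
  set x : Fin k → Fin d := fun t => X.orderIsoOfFin hXcard t with hxdef
  set y : Fin k → Fin d := fun t => G.orderIsoOfFin hGcard t with hydef
  have hxX : ∀ t, x t ∈ X := fun t => (X.orderIsoOfFin hXcard t).2
  have hyG : ∀ t, y t ∈ G := fun t => (G.orderIsoOfFin hGcard t).2
  have hxinj : Function.Injective x := fun a b h => by
    have := (X.orderIsoOfFin hXcard).injective (Subtype.ext h)
    exact this
  have hyinj : Function.Injective y := fun a b h => by
    have := (G.orderIsoOfFin hGcard).injective (Subtype.ext h)
    exact this
  have hvx : ∀ t, v (x t) ≠ g := fun t => by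
    have := hXsub (hxX t); simp only [Finset.mem_filter] at this; exact this.2
  have hvy : ∀ t, v (y t) = g := fun t => by
    have := hGsub (hyG t); simp only [Finset.mem_filter] at this; exact this.2
  set f : Fin (2*k) → Fin d := fun t =>
    if t.val % 2 = 0 then x ⟨t.val/2, hhalf t⟩ else y ⟨t.val/2, hhalf t⟩ with hfdef
  have hfinj : Function.Injective f := by
    intro s t hst
    rw [hfdef] at hst
    simp only at hst
    by_cases hs : s.val % 2 = 0 <;> by_cases ht : t.val % 2 = 0 <;> simp [hs, ht] at hst
    · have : (⟨s.val/2, hhalf s⟩ : Fin k) = ⟨t.val/2, hhalf t⟩ := hxinj hst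
      have := Fin.mk.injEq _ _ _ _ ▸ this
      apply Fin.ext
      have h2 : s.val / 2 = t.val / 2 := by simpa using this
      omega
    · exact (hvx ⟨s.val/2, hhalf s⟩ (by rw [hst]; exact hvy _)).elim
    · exact (hvx ⟨t.val/2, hhalf t⟩ (by rw [← hst]; exact hvy _)).elim
    · have : (⟨s.val/2, hhalf s⟩ : Fin k) = ⟨t.val/2, hhalf t⟩ := hyinj hst
      have h2 : s.val / 2 = t.val / 2 := by simpa using this
      apply Fin.ext
      omega
  set F : List (Fin d) := List.ofFn f with hFdef
  have hFlen : F.length = 2*k := by simp [hFdef]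
  have hFnd : F.Nodup := by
    rw [hFdef, List.nodup_ofFn]
    exact hfinj
  have hgetD : ∀ (s : ℕ) (hs : s < 2*k), F.getD s ⟨0, hd⟩ = f ⟨s, hs⟩ := by
    intro s hs
    rw [List.getD_eq_getElem F _ (by omega : s < F.length)]
    simp [hFdef]
  set K : Finset ℕ := (Finset.range k).image (fun t => 2*t) with hKdef
  have hKcard : K.card = k := by
    rw [hKdef, Finset.card_image_of_injective _ (fun a b h => by omega), Finset.card_range]
  have hKmem : ∀ j ∈ K, ∃ t < k, j = 2*t := by
    intro j hj
    simp only [hKdef, Finset.mem_image, Finset.mem_range] at hj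
    obtain ⟨t, ht, rfl⟩ := hj
    exact ⟨t, ht, rfl⟩
  have hK1 : ∀ j ∈ K, j + 1 < F.length := by
    intro j hj
    obtain ⟨t, ht, rfl⟩ := hKmem j hj
    rw [hFlen]; omega
  have hval : ∀ j ∈ K, v (F.getD j ⟨0, hd⟩) ≠ v (F.getD (j+1) ⟨0, hd⟩) := by
    intro j hj
    obtain ⟨t, ht, rfl⟩ := hKmem j hj
    rw [hgetD _ (by omega), hgetD _ (by omega)]
    have he : (2*t) % 2 = 0 := by omega
    have ho : (2*t+1) % 2 ≠ 0 := by omega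
    simp only [hfdef]
    rw [if_pos he, if_neg ho]
    rw [hvy]
    exact hvx _
  have hinj : Set.InjOn (fun j => ((F.take j).map v).sum + v (F.getD (j+1) ⟨0, hd⟩)) K := by
    intro a ha b hb hab
    obtain ⟨s, hs, rfl⟩ := hKmem a ha
    obtain ⟨t, ht, rfl⟩ := hKmem b hb
    simp only at hab
    rw [hgetD _ (by omega), hgetD _ (by omega)] at hab
    have hs1 : (2*s+1) % 2 ≠ 0 := by omega
    have ht1 : (2*t+1) % 2 ≠ 0 := by omega
    rw [hfdef] at hab
    simp only [if_neg hs1, if_neg ht1] at hab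
    rw [hvy, hvy] at hab
    have hab2 : ((F.take (2*s)).map v).sum = ((F.take (2*t)).map v).sum := by
      have := add_right_cancel hab
      exact this
    by_contra hne
    have hne2 : 2*s ≠ 2*t := by omega
    rcases lt_or_gt_of_ne hne2 with h | h
    · exact prefix_ne hv hFnd h (by rw [hFlen]; omega) hab2
    · exact prefix_ne hv hFnd h (by rw [hFlen]; omega) hab2.symm
  have := kcl hv hd hFnd hK1 hval hinj
  rw [hKcard] at this
  omega

lemma card_image_le [NeZero n] (hv : ZeroSumFree v) {k : ℕ} (hk : 1 ≤ k) (hn : d + k = n)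
    (hd : k + 1 ≤ d) : (Finset.univ.image v).card ≤ 2*k := by
  classical
  by_contra hcon
  push_neg at hcon
  have hd0 : 0 < d := by omega
  set μ : List (Fin d) → ℕ → ZMod n :=
    fun F j => ((F.take j).map v).sum + v (F.getD (j+1) ⟨0, hd0⟩) with hμdef
  -- greedy construction
  have main : ∀ t, 1 ≤ t → t ≤ k+1 → ∃ F : List (Fin d), F.length = t ∧ (F.map v).Nodup ∧
      Set.InjOn (μ F) (Finset.range (t-1)) := by
    intro t ht
    induction t, ht using Nat.le_induction with
    | base =>
      intro _
      refine ⟨[⟨0, hd0⟩], rfl, by simp, ?_⟩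
      simp [Set.InjOn]
    | succ t ht ih =>
      intro htk
      obtain ⟨F, hFlen, hFnd, hFinj⟩ := ih (by omega)
      -- choose a fresh value
      set S : ZMod n := ((F.take (t-1)).map v).sum with hSdef
      set Bad : Finset (ZMod n) :=
        (F.map v).toFinset ∪ (Finset.range (t-1)).image (fun i => μ F i - S) with hBaddef
      have hBadcard : Bad.card ≤ 2*k - 1 := by
        calc Bad.card ≤ (F.map v).toFinset.card + ((Finset.range (t-1)).image (fun i => μ F i - S)).card :=
              Finset.card_union_le _ _
        _ ≤ F.length + (t-1) := by
            gcongr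
            · exact le_trans (List.toFinset_card_le _) (by simp)
            · exact le_trans (Finset.card_image_le) (by simp)
        _ ≤ 2*k - 1 := by omega
      have : ∃ w ∈ Finset.univ.image v, w ∉ Bad := by
        by_contra hall
        push_neg at hall
        have := Finset.card_le_card hall
        omega
      obtain ⟨w, hw, hwbad⟩ := this
      obtain ⟨e, _, hve⟩ := Finset.mem_image.mp hw
      refine ⟨F ++ [e], by simp [hFlen], ?_, ?_⟩
      · rw [List.map_append, List.nodup_append]
        refine ⟨hFnd, by simp, ?_⟩
        intro a ha b hb hab; subst hab
        simp at hb
        rw [hb, hve] at ha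
        exact hwbad (Finset.mem_union_left _ (List.mem_toFinset.mpr ha))
      · -- injectivity of μ (F ++ [e]) on range t
        have hstab : ∀ j, j + 1 < t → μ (F ++ [e]) j = μ F j := by
          intro j hj
          rw [hμdef]
          simp only
          congr 1
          · congr 1
            rw [List.take_append]
            have : j - F.length = 0 := by omega
            simp [this]
          · congr 1
            rw [List.getD_eq_getElem _ _ (by simp [hFlen]; omega : j+1 < (F ++ [e]).length),
               List.getD_eq_getElem _ _ (by omega : j+1 < F.length)]
            rw [List.getElem_append_left]
        have hlast : μ (F ++ [e]) (t-1) = S + v e := by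
          rw [hμdef]
          simp only
          congr 1
          · congr 1
            rw [List.take_append]
            have : t - 1 - F.length = 0 := by omega
            simp [this, hSdef, hFlen]
          · congr 1
            rw [List.getD_eq_getElem _ _ (by simp [hFlen]; omega : (t-1)+1 < (F ++ [e]).length)]
            have : (t-1)+1 = t := by omega
            rw [List.getElem_append_right (by omega : F.length ≤ (t-1)+1)]
            simp [hFlen, this]
        intro a ha b hb hab
        simp only [Finset.coe_range, Set.mem_Iio] at ha hb
        have hsucc : t + 1 - 1 = t := by omega
        rw [hsucc] at ha hb
        rcases lt_trichotomy a (t-1) with ha' | ha' | ha'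
        · rcases lt_trichotomy b (t-1) with hb' | hb' | hb'
          · rw [hstab a (by omega), hstab b (by omega)] at hab
            exact hFinj (by simp; omega) (by simp; omega) hab
          · subst hb'
            rw [hstab a (by omega), hlast] at hab
            exfalso
            apply hwbad
            rw [← hve]
            apply Finset.mem_union_right
            apply Finset.mem_image.mpr
            refine ⟨a, by simp; omega, ?_⟩
            rw [hab]; ring
          · omega
        · subst ha'
          rcases lt_trichotomy b (t-1) with hb' | hb' | hb'
          · rw [hstab b (by omega), hlast] at hab
            exfalso
            apply hwbad
            rw [← hve]
            apply Finset.mem_union_right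
            apply Finset.mem_image.mpr
            refine ⟨b, by simp; omega, ?_⟩
            rw [← hab]; ring
          · omega
          · omega
        · omega
  obtain ⟨F, hFlen, hFnd, hFinj⟩ := main (k+1) (by omega) le_rfl
  have hFnd' : F.Nodup := hFnd.of_map
  have hK1 : ∀ j ∈ Finset.range k, j + 1 < F.length := by
    intro j hj
    simp at hj
    omega
  have hval : ∀ j ∈ Finset.range k, v (F.getD j ⟨0, hd0⟩) ≠ v (F.getD (j+1) ⟨0, hd0⟩) := by
    intro j hj
    simp at hj
    rw [List.getD_eq_getElem _ _ (by omega : j < F.length),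
        List.getD_eq_getElem _ _ (by omega : j+1 < F.length)]
    intro h
    have h1 : (F.map v)[j]'(by simp; omega) = (F.map v)[j+1]'(by simp; omega) := by
      simp only [List.getElem_map]
      exact h
    have := (List.Nodup.getElem_inj_iff hFnd).mp h1
    omega
  have hinj : Set.InjOn (fun j => ((F.take j).map v).sum + v (F.getD (j+1) ⟨0, hd0⟩)) (Finset.range k) := by
    intro a ha b hb hab
    apply hFinj (by simpa using ha) (by simpa using hb)
    exact hab
  have := kcl hv hd0 hFnd' hK1 hval hinj
  rw [Finset.card_range] at this
  omega

theorem structure_thm [NeZero n] (hv : ZeroSumFree v) {k : ℕ} (hk : 1 ≤ k)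
    (hn : d + k = n) (hbig : 4*k^2 + 20*k + 20 ≤ n) :
    ∃ (u : (ZMod n)ˣ) (a : Fin d → ℕ), (∀ i, 1 ≤ a i) ∧ (∑ i, a i ≤ n - 1) ∧
      (∀ i, v i = (a i : ZMod n) * u) := by
  classical
  have hd0 : 0 < d := by nlinarith
  have hdk : k + 1 ≤ d := by nlinarith
  -- a value with a large fiber
  have hr : (Finset.univ.image v).card ≤ 2*k := card_image_le hv hk hn hdk
  have hfiber : ∃ g ∈ Finset.univ.image v, k ≤ (Finset.univ.filter (fun i => v i = g)).card := by
    by_contra hall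
    push_neg at hall
    have hsum : (Finset.univ : Finset (Fin d)).card =
        ∑ g ∈ Finset.univ.image v, (Finset.univ.filter (fun i => v i = g)).card :=
      Finset.card_eq_sum_card_fiberwise (fun x _ => Finset.mem_image_of_mem v (Finset.mem_univ x))
    have hle : ∑ g ∈ Finset.univ.image v, (Finset.univ.filter (fun i => v i = g)).card ≤
        (Finset.univ.image v).card * (k-1) := by
      apply Finset.sum_le_card_nsmul
      intro g hg
      have := hall g hg
      omega
    rw [Finset.card_univ, Fintype.card_fin] at hsum
    have hdle : d ≤ 2*k*(k-1) := by
      calc d = _ := hsum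
      _ ≤ (Finset.univ.image v).card * (k-1) := hle
      _ ≤ 2*k*(k-1) := by exact Nat.mul_le_mul_right _ hr
    have hkk : 2*k*(k-1) ≤ 2*(k*k) := by
      have h1 : k - 1 ≤ k := Nat.sub_le k 1
      calc 2*k*(k-1) ≤ 2*k*k := Nat.mul_le_mul_left _ h1
      _ = 2*(k*k) := by ring
    have hbig' : 4*(k*k) + 20*k + 20 ≤ n := by
      have : k^2 = k*k := pow_two k
      omega
    omega
  obtain ⟨g, hgmem, hgfiber⟩ := hfiber
  set O : Finset (Fin d) := Finset.univ.filter (fun i => v i = g) with hOdef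
  set R : Finset (Fin d) := Finset.univ.filter (fun i => v i ≠ g) with hRdef
  have hOR : O.card + R.card = d := by
    have := Finset.card_filter_add_card_filter_not (s := (Finset.univ : Finset (Fin d)))
      (p := fun i => v i = g)
    simpa using this
  have hRsmall : R.card ≤ k - 1 := by
    by_contra hcon
    apply mult_dichotomy hv hk hn hd0 g hgfiber
    rw [← hRdef]
    omega
  set m : ℕ := O.card with hmdef
  clear_value m
  have hm : n - 2*k + 1 ≤ m := by omega
  have hmle : m ≤ d := by omega
  -- g has large additive order
  have hchain : ∀ j, 1 ≤ j → j ≤ m → (j : ℕ) • g ≠ 0 := by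
    intro j hj1 hjm
    obtain ⟨J, hJsub, hJcard⟩ := Finset.exists_subset_card_eq (by omega : j ≤ O.card)
    have hsum : ∑ i ∈ J, v i = (j : ℕ) • g := by
      rw [Finset.sum_congr rfl (fun i hi => ?_), Finset.sum_const, hJcard]
      have := hJsub hi
      rw [hOdef] at this
      simp at this
      exact this
    rw [← hsum]
    exact hv J (Finset.card_pos.mp (by omega))
  have hord : addOrderOf g = n := by
    have hdvd : addOrderOf g ∣ n := addOrderOf_dvd_of_nsmul_eq_zero (by
      simp [nsmul_eq_mul, ZMod.natCast_self])
    have hgt : m < addOrderOf g := by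
      by_contra hcon
      push_neg at hcon
      have hpos : 0 < addOrderOf g := by
        apply addOrderOf_pos
      exact hchain _ hpos hcon (addOrderOf_nsmul_eq_zero g)
    rcases hdvd with ⟨c, hc⟩
    rcases Nat.lt_or_ge c 2 with hc2 | hc2
    · interval_cases c
      · simp at hc; omega
      · simp at hc; omega
    · exfalso
      have h2 : 2 * addOrderOf g ≤ c * addOrderOf g := Nat.mul_le_mul_right _ hc2
      have h3 : c * addOrderOf g = n := (Nat.mul_comm c _).trans hc.symm
      omega
  have hunit : IsUnit g := by
    have hcast : ((g.val : ℕ) : ZMod n) = g := by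
      rw [ZMod.natCast_val, ZMod.cast_id]
    have := ZMod.addOrderOf_coe g.val (NeZero.ne n)
    rw [hcast, hord] at this
    have hgcd : n.gcd g.val = 1 := by
      have hds : n / n.gcd g.val = n := this.symm
      rcases Nat.div_eq_self.mp hds with h | h
      · exact absurd h (NeZero.ne n)
      · exact h
    rw [← hcast]
    rw [ZMod.isUnit_iff_coprime]
    rwa [Nat.Coprime, Nat.gcd_comm]
  set u : (ZMod n)ˣ := hunit.unit with hudef
  have hug : (u : ZMod n) = g := hunit.unit_spec
  set w : Fin d → ZMod n := fun i => (↑u⁻¹ : ZMod n) * v i with hwdef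
  have hw : ZeroSumFree w := by
    intro S hS h
    apply hv S hS
    rw [hwdef] at h
    simp only at h
    rw [← Finset.mul_sum] at h
    have := Units.mul_right_eq_zero (a := ∑ i ∈ S, v i) (u := u⁻¹)
    rw [this] at h
    exact h
  have hwO : ∀ i ∈ O, w i = 1 := by
    intro i hi
    rw [hOdef] at hi
    simp at hi
    rw [hwdef]
    simp only
    rw [hi, ← hug, Units.inv_mul]
  -- column bound
  have hcol : ∀ S ⊆ R, S.Nonempty → (∑ i ∈ S, w i).val ≤ n - 1 - m := by
    intro S hSsub hSne
    have key : ∀ j, j ≤ m → ∑ i ∈ S, w i + (j : ZMod n) ≠ 0 := by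
      intro j hj
      obtain ⟨J, hJsub, hJcard⟩ := Finset.exists_subset_card_eq (by omega : j ≤ O.card)
      have hdisj : Disjoint S J := by
        rw [Finset.disjoint_left]
        intro i hiS hiJ
        have h1 := hSsub hiS
        have h2 := hJsub hiJ
        rw [hRdef] at h1
        rw [hOdef] at h2
        simp at h1 h2
        exact h1 h2
      have hsum : ∑ i ∈ S ∪ J, w i = ∑ i ∈ S, w i + (j : ZMod n) := by
        rw [Finset.sum_union hdisj]
        congr 1
        rw [Finset.sum_congr rfl (fun i hi => hwO i (hJsub hi)), Finset.sum_const, hJcard]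
        simp
      rw [← hsum]
      exact hw _ (Finset.Nonempty.mono Finset.subset_union_left hSne)
    set x : ZMod n := ∑ i ∈ S, w i with hxdef
    by_contra hcon
    push_neg at hcon
    have hxval : x.val ≤ n - 1 := by
      have := ZMod.val_lt x
      omega
    have hj : 1 ≤ n - x.val ∧ n - x.val ≤ m := by
      have := ZMod.val_lt x
      omega
    apply key (n - x.val) hj.2
    have hxc : ((x.val : ℕ) : ZMod n) = x := by
      rw [ZMod.natCast_val, ZMod.cast_id]
    have hcast0 : ((x.val + (n - x.val) : ℕ) : ZMod n) = 0 := by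
      rw [show x.val + (n - x.val) = n by omega]
      exact ZMod.natCast_self n
    calc x + ((n - x.val : ℕ) : ZMod n) = ((x.val : ℕ) : ZMod n) + ((n - x.val : ℕ) : ZMod n) := by
          rw [hxc]
    _ = ((x.val + (n - x.val) : ℕ) : ZMod n) := (Nat.cast_add _ _).symm
    _ = 0 := hcast0
  -- creep: integer sums over R
  have hnm : n - 1 - m ≤ 2*k - 2 := by omega
  set LR : List (Fin d) := R.toList with hLRdef
  have hLRnd : LR.Nodup := Finset.nodup_toList R
  have hcreep : ∀ j ≤ LR.length,
      ((LR.take j).map (fun i => (w i).val)).sum ≤ n - 1 - m ∧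
      (((LR.take j).map w).sum).val = ((LR.take j).map (fun i => (w i).val)).sum := by
    intro j
    induction j with
    | zero => intro _; simp
    | succ j ih =>
      intro hj1
      obtain ⟨ih1, ih2⟩ := ih (by omega)
      have hjlt : j < LR.length := by omega
      have htake : LR.take (j+1) = LR.take j ++ [LR[j]] := by
        rw [List.take_succ, List.getElem?_eq_getElem hjlt]
        rfl
      have hememR : LR[j] ∈ R := by
        rw [← Finset.mem_toList]
        exact List.getElem_mem _
      have hc : (w LR[j]).val ≤ n - 1 - m := by
        have := hcol {LR[j]} (by simpa using hememR) (Finset.singleton_nonempty _)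
        simpa using this
      have hsmall : (((LR.take j).map w).sum).val + (w LR[j]).val < n := by
        rw [ih2]
        omega
      have hvaladd : (((LR.take (j+1)).map w).sum).val =
          ((LR.take j).map (fun i => (w i).val)).sum + (w LR[j]).val := by
        rw [htake, List.map_append, List.sum_append]
        simp only [List.map_cons, List.map_nil, List.sum_cons, List.sum_nil, add_zero]
        rw [ZMod.val_add_of_lt hsmall, ih2]
      constructor
      · -- the new integer sum is still ≤ n - 1 - m
        rcases Nat.eq_zero_or_pos j with hj0 | hj0
        · subst hj0
          simp only [List.take_zero, List.map_nil, List.sum_nil, Nat.zero_add] at *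
          rw [htake]
          simpa using hc
        · -- use column on the set of indices in the prefix
          have hsubR : (LR.take (j+1)).toFinset ⊆ R := by
            intro i hi
            rw [List.mem_toFinset] at hi
            rw [← Finset.mem_toList]
            exact List.mem_of_mem_take hi
          have hndp : (LR.take (j+1)).Nodup := (List.take_sublist _ _).nodup hLRnd
          have hfs : ∑ i ∈ (LR.take (j+1)).toFinset, w i = ((LR.take (j+1)).map w).sum :=
            List.sum_toFinset _ hndp
          have hne : (LR.take (j+1)).toFinset.Nonempty := by
            refine ⟨LR[j], ?_⟩
            rw [List.mem_toFinset, htake]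
            exact List.mem_append_right _ (List.mem_singleton_self _)
          have := hcol _ hsubR hne
          rw [hfs] at this
          rw [hvaladd] at this
          rw [htake, List.map_append, List.sum_append]
          simpa using this
      · rw [hvaladd, htake, List.map_append, List.sum_append]
        simp
  have hRsum : ∑ i ∈ R, (w i).val ≤ n - 1 - m := by
    have := (hcreep LR.length le_rfl).1
    rw [List.take_length] at this
    calc ∑ i ∈ R, (w i).val = (LR.map (fun i => (w i).val)).sum := by
          rw [hLRdef, ← List.sum_toFinset _ hLRnd]
          congr 1
          exact (Finset.toList_toFinset R).symm
    _ ≤ n - 1 - m := this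
  -- assemble
  refine ⟨u, fun i => (w i).val, ?_, ?_, ?_⟩
  · intro i
    have : w i ≠ 0 := by
      have := hw {i} (Finset.singleton_nonempty i)
      simpa using this
    have := (ZMod.val_eq_zero (w i)).not.mpr this
    show 1 ≤ (w i).val
    omega
  · have hsplit : ∑ i, (w i).val = ∑ i ∈ O, (w i).val + ∑ i ∈ R, (w i).val := by
      rw [hOdef, hRdef]
      exact (Finset.sum_filter_add_sum_filter_not _ _ _).symm
    have hOsum : ∑ i ∈ O, (w i).val = m := by
      rw [Finset.sum_congr rfl (fun i hi => by rw [hwO i hi]), Finset.sum_const]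
      have h1 : (1 : ZMod n).val = 1 := by
        rw [ZMod.val_one_eq_one_mod]
        exact Nat.mod_eq_of_lt (by omega)
      rw [h1]
      simp [hmdef]
    rw [hsplit, hOsum]
    omega
  · intro i
    have : (((w i).val : ℕ) : ZMod n) = w i := by
      rw [ZMod.natCast_val, ZMod.cast_id]
    rw [this]
    show v i = ((↑u⁻¹ : ZMod n) * v i) * ↑u
    have huu : (↑u⁻¹ : ZMod n) * ↑u = 1 := Units.inv_mul u
    rw [mul_assoc, mul_comm (v i) (↑u : ZMod n), ← mul_assoc, huu, one_mul]

lemma sum_sub_one {a : Fin d → ℕ} (ha : ∀ i, 1 ≤ a i) :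
    ∑ i, (a i - 1) + d = ∑ i, a i := by
  have h1 : ∑ i, ((a i - 1) + 1) = ∑ i, a i :=
    Finset.sum_congr rfl (fun i _ => by have := ha i; omega)
  rw [← h1, Finset.sum_add_distrib, Finset.sum_const, Finset.card_univ, Fintype.card_fin]
  simp

theorem main_count [NeZero n] {k : ℕ} (hk : 1 ≤ k) (hn : d + k = n)
    (hbig : 4*k^2 + 20*k + 20 ≤ n) :
    Nat.card {v : Fin d → ZMod n // ZeroSumFree v} = Nat.totient n * (n-1).choose (k-1) := by
  classical
  have hd0 : 0 < d := by nlinarith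
  set A : Type := {a : Fin d → ℕ // (∀ i, 1 ≤ a i) ∧ ∑ i, a i ≤ n - 1} with hAdef
  -- the canonical map
  have hzsf : ∀ (u : (ZMod n)ˣ) (a : A), ZeroSumFree (fun i => ((a.1 i : ℕ) : ZMod n) * (u : ZMod n)) := by
    rintro u ⟨a, ha1, ha2⟩ S hS h
    simp only at h
    rw [← Finset.sum_mul, ← Nat.cast_sum] at h
    have hcast : ((∑ i ∈ S, a i : ℕ) : ZMod n) = 0 := by
      have := Units.mul_left_eq_zero (a := ((∑ i ∈ S, a i : ℕ) : ZMod n)) (u := u)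
      rwa [this] at h
    rw [ZMod.natCast_eq_zero_iff] at hcast
    have hlow : S.card ≤ ∑ i ∈ S, a i := by
      calc S.card = ∑ _i ∈ S, 1 := by simp
      _ ≤ ∑ i ∈ S, a i := Finset.sum_le_sum (fun i _ => ha1 i)
    have hup : ∑ i ∈ S, a i ≤ n - 1 := by
      calc ∑ i ∈ S, a i ≤ ∑ i, a i := Finset.sum_le_sum_of_subset (Finset.subset_univ S)
      _ ≤ n - 1 := ha2
    have hpos : 1 ≤ ∑ i ∈ S, a i := by
      have := Finset.card_pos.mpr hS
      omega
    have := Nat.le_of_dvd (by omega) hcast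
    omega
  set Φ : (ZMod n)ˣ × A → {v : Fin d → ZMod n // ZeroSumFree v} :=
    fun p => ⟨fun i => ((p.2.1 i : ℕ) : ZMod n) * (p.1 : ZMod n), hzsf p.1 p.2⟩ with hΦdef
  have hones : ∀ (a : Fin d → ℕ), (∀ i, 1 ≤ a i) → (∑ i, a i ≤ n - 1) →
      d - (k-1) ≤ (Finset.univ.filter (fun i => a i = 1)).card := by
    intro a ha1 ha2
    have hsub := sum_sub_one ha1
    have hc2 : (Finset.univ.filter (fun i => ¬ (a i = 1))).card ≤ ∑ i, (a i - 1) := by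
      calc (Finset.univ.filter (fun i => ¬ (a i = 1))).card
          = ∑ i ∈ Finset.univ.filter (fun i => ¬ (a i = 1)), 1 := by simp
      _ ≤ ∑ i ∈ Finset.univ.filter (fun i => ¬ (a i = 1)), (a i - 1) := by
          apply Finset.sum_le_sum
          intro i hi
          simp only [Finset.mem_filter] at hi
          have := ha1 i
          omega
      _ ≤ ∑ i, (a i - 1) := Finset.sum_le_sum_of_subset (Finset.filter_subset _ _)
    have hcards := Finset.card_filter_add_card_filter_not
      (s := (Finset.univ : Finset (Fin d))) (p := fun i => a i = 1)
    rw [Finset.card_univ, Fintype.card_fin] at hcards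
    omega
  have hinj : Function.Injective Φ := by
    rintro ⟨u, a, ha1, ha2⟩ ⟨u', b, hb1, hb2⟩ heq
    have heq' : ∀ i, ((a i : ℕ) : ZMod n) * ↑u = ((b i : ℕ) : ZMod n) * ↑u' := by
      intro i
      have := congrArg (fun z => z.1 i) heq
      simpa using this
    set A1 := Finset.univ.filter (fun i => a i = 1) with hA1
    set B1 := Finset.univ.filter (fun i => b i = 1) with hB1
    have hA1c := hones a ha1 ha2
    have hB1c := hones b hb1 hb2
    rw [← hA1] at hA1c
    rw [← hB1] at hB1c
    have hint : (A1 ∩ B1).Nonempty := by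
      rw [← Finset.card_pos]
      have hu := Finset.card_union_add_card_inter A1 B1
      have hle : (A1 ∪ B1).card ≤ d := by
        calc (A1 ∪ B1).card ≤ (Finset.univ : Finset (Fin d)).card := Finset.card_le_card (by simp)
        _ = d := by simp
      have hd2k : 2*k - 1 ≤ d := by
        have h2 : k^2 = k*k := pow_two k
        have h3 : k ≤ k*k := Nat.le_mul_of_pos_left k hk
        omega
      omega
    obtain ⟨i0, hi0⟩ := hint
    rw [Finset.mem_inter, hA1, hB1] at hi0
    simp only [Finset.mem_filter, Finset.mem_univ, true_and] at hi0
    have huu' : u = u' := by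
      have := heq' i0
      rw [hi0.1, hi0.2] at this
      simp at this
      exact Units.ext this
    subst huu'
    have hab : a = b := by
      funext i
      have h := heq' i
      have hcancel : ((a i : ℕ) : ZMod n) = ((b i : ℕ) : ZMod n) := by
        have := congrArg (fun z => z * (↑u⁻¹ : ZMod n)) h
        simpa [mul_assoc, Units.mul_inv] using this
      have hai : a i < n := by
        have : a i ≤ ∑ j, a j := Finset.single_le_sum (fun j _ => Nat.zero_le _) (Finset.mem_univ i)
        omega
      have hbi : b i < n := by
        have : b i ≤ ∑ j, b j := Finset.single_le_sum (fun j _ => Nat.zero_le _) (Finset.mem_univ i)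
        omega
      have := congrArg ZMod.val hcancel
      rwa [ZMod.val_cast_of_lt hai, ZMod.val_cast_of_lt hbi] at this
    subst hab
    rfl
  have hsurj : Function.Surjective Φ := by
    rintro ⟨v, hv⟩
    obtain ⟨u, a, ha1, ha2, ha3⟩ := structure_thm hv hk hn hbig
    refine ⟨(u, ⟨a, ha1, ha2⟩), ?_⟩
    apply Subtype.ext
    funext i
    exact (ha3 i).symm
  have hcardeq : Nat.card {v : Fin d → ZMod n // ZeroSumFree v} = Nat.card ((ZMod n)ˣ × A) :=
    (Nat.card_congr (Equiv.ofBijective Φ ⟨hinj, hsurj⟩)).symm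
  -- card of A
  have hEA : Nat.card A = (n-1).choose (k-1) := by
    have e1 : A ≃ {b : Fin d → ℕ // ∑ i, b i ≤ k - 1} := by
      refine ⟨fun a => ⟨fun i => a.1 i - 1, ?_⟩, fun b => ⟨fun i => b.1 i + 1, ?_, ?_⟩, ?_, ?_⟩
      · show ∑ i, (a.1 i - 1) ≤ k - 1
        have := sum_sub_one a.2.1
        have := a.2.2
        omega
      · intro i
        show 1 ≤ b.1 i + 1
        omega
      · show ∑ i, (b.1 i + 1) ≤ n - 1
        have hsum : ∑ i, (b.1 i + 1) = ∑ i, b.1 i + d := by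
          rw [Finset.sum_add_distrib, Finset.sum_const, Finset.card_univ, Fintype.card_fin]
          simp
        have := b.2
        omega
      · rintro ⟨a, ha1, ha2⟩
        apply Subtype.ext
        funext i
        show (a i - 1) + 1 = a i
        have := ha1 i
        omega
      · rintro ⟨b, hb⟩
        apply Subtype.ext
        funext i
        show (b i + 1) - 1 = b i
        omega
    have e2 : {b : Fin d → ℕ // ∑ i, b i ≤ k - 1} ≃ {c : Fin (d+1) → ℕ // ∑ i, c i = k - 1} := by
      refine ⟨fun b => ⟨Fin.cons ((k-1) - ∑ i, b.1 i) b.1, ?_⟩,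
              fun c => ⟨fun i => c.1 i.succ, ?_⟩, ?_, ?_⟩
      · rw [Fin.sum_cons]
        have hb2 : ∑ i, b.1 i ≤ k - 1 := b.2
        omega
      · show ∑ i : Fin d, c.1 i.succ ≤ k - 1
        have hc2 := c.2
        rw [Fin.sum_univ_succ] at hc2
        omega
      · rintro ⟨b, hb⟩
        apply Subtype.ext
        funext i
        show (Fin.cons ((k-1) - ∑ i, b i) b : Fin (d+1) → ℕ) i.succ = b i
        rw [Fin.cons_succ]
      · rintro ⟨c, hc⟩
        apply Subtype.ext
        funext i
        show (Fin.cons ((k-1) - ∑ i : Fin d, c i.succ) (fun i : Fin d => c i.succ) : Fin (d+1) → ℕ) i = c i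
        refine Fin.cases ?_ ?_ i
        · rw [Fin.cons_zero]
          rw [Fin.sum_univ_succ] at hc
          omega
        · intro j
          rw [Fin.cons_succ]
    have e3 : {c : Fin (d+1) → ℕ // ∑ i, c i = k - 1} ≃ Sym (Fin (d+1)) (k-1) :=
      (Sym.equivNatSumOfFintype (Fin (d+1)) (k-1)).symm
    rw [Nat.card_congr (e1.trans (e2.trans e3))]
    rw [Nat.card_eq_fintype_card, Sym.card_sym_eq_multichoose, Nat.multichoose_eq]
    rw [Fintype.card_fin]
    congr 1
    omega
  rw [hcardeq, Nat.card_prod, hEA]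
  congr 1
  rw [Nat.card_eq_fintype_card, ZMod.card_units_eq_totient]

end ZSF

theorem alpha_n_sub_k_eventually (k : ℕ) (hk : 1 ≤ k) :
    ∃ N : ℕ, ∀ n : ℕ, N ≤ n → 1 ≤ n - k →
      alphaZSF n (n - k) = Nat.totient n * (n - 1).choose (k - 1) := by
  refine ⟨4*k^2 + 20*k + 20, fun n hN h1 => ?_⟩
  haveI : NeZero n := ⟨by nlinarith⟩
  have hn : (n - k) + k = n := by omega
  exact ZSF.main_count hk hn hN
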